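/- Let B be a block of a Schur algebra with a·p^k simple modules and λ ∈ B a weight not in I_0^{(k)}. Then the indecomposable tilting module T(λ) has exactly two Δ-quotients (i.e. Σ_ρ [T(λ):Δ(ρ)] = 2) if and only if λ is the smallest weight in I_c^{(k)} for some c ≥ 1. -/
import Mathlib


def cdec (p : ℕ) (m n : ℕ) : ℕ :=
  if h : p ≤ 1 ∨ m < p then (if n = m then 1 else 0)
  else
    (if n % p = m % p then cdec p (m / p) (n / p) else 0) +
    (if m % p ≠ p - 1 ∧ n % p = p - 2 - m % p then cdec p (m / p - 1) (n / p) else 0)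
termination_by m
decreasing_by
  · push_neg at h
    exact Nat.div_lt_self (by omega) (by omega)
  · push_neg at h
    exact lt_of_le_of_lt (Nat.sub_le _ _) (Nat.div_lt_self (by omega) (by omega))

/-- Filtration multiplicities `[T̄(m) : Δ̄(n)]` of standard modules in indecomposable
tilting modules of the classical Schur algebra `S(2,r)`, via the factorisations
`T̄(pq+j) ≅ T̄(p+j) ⊗ T̄(q-1)^F` (for `0 ≤ j ≤ p-2`), `T̄(pq+p-1) ≅ T̄(p-1) ⊗ T̄(q)^F`,
and the short exact sequence `0 → Δ̄(pu+j) → T̄(p+j) ⊗ Δ̄(u-?)` giving the two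
`Δ`-quotients `Δ̄(p(u+1)+j)` and `Δ̄(pu + p-2-j)`. -/
def ctilt (p : ℕ) (m n : ℕ) : ℕ :=
  if h : p ≤ 1 ∨ m < p then (if n = m then 1 else 0)
  else if m % p = p - 1 then
    (if n % p = p - 1 then ctilt p (m / p) (n / p) else 0)
  else
    (if n % p = m % p ∧ 1 ≤ n / p then ctilt p (m / p - 1) (n / p - 1) else 0) +
    (if n % p = p - 2 - m % p then ctilt p (m / p - 1) (n / p) else 0)
termination_by m
decreasing_by
  · push_neg at h
    exact Nat.div_lt_self (by omega) (by omega)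
  · push_neg at h
    exact lt_of_le_of_lt (Nat.sub_le _ _) (Nat.div_lt_self (by omega) (by omega))
  · push_neg at h
    exact lt_of_le_of_lt (Nat.sub_le _ _) (Nat.div_lt_self (by omega) (by omega))

/-- Decomposition numbers `[Δ(λ_m) : L(λ_n)]` for a primitive block of the (quantum)
Schur algebra, indexed by the positions `m, n` of the weights `λ_m = ℓm + i*(m)` in the
block: from `0 → Δ(ī*) ⊗ Δ̄(m-1)^F → Δ(ℓm + i*) → L(i*) ⊗ Δ̄(m)^F → 0`. -/
def qdec (p : ℕ) (m n : ℕ) : ℕ :=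
  cdec p m n + (if 1 ≤ m then cdec p (m - 1) n else 0)

/-- Tilting multiplicities `[T(λ_m) : Δ(λ_n)]` for a primitive block of the (quantum)
Schur algebra, indexed as in `qdec`: from `T(ℓm+i*) ≅ T(ℓ+i*) ⊗ T̄(m-1)^F` and the fact
that `T(ℓ+i*) ⊗ Δ̄(u)^F` has exactly the two `Δ`-quotients `Δ(ℓ(u+1)+i*)`, `Δ(ℓu+ī*)`. -/
def qtilt (p : ℕ) (m n : ℕ) : ℕ :=
  if 1 ≤ m then
    (if 1 ≤ n then ctilt p (m - 1) (n - 1) else 0) + ctilt p (m - 1) n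
  else (if n = 0 then 1 else 0)

/-- The weight in position `m` of a primitive block with lowest weight `i`:
`wt m = ℓ·m + i*` where `i* = i` or `ℓ - 2 - i` according to the parity of `m`. -/
def wt (ℓ i : ℤ) (m : ℕ) : ℤ := ℓ * m + (if Even m then i else ℓ - 2 - i)

-- sanity checks against the p = 5 figures

def Csum (p : ℕ) (m : ℕ) : ℕ :=
  if h : p ≤ 1 ∨ m < p then 1
  else if m % p = p - 1 then Csum p (m / p)
  else 2 * Csum p (m / p - 1)
termination_by m
decreasing_by
  · push_neg at h
    exact Nat.div_lt_self (by omega) (by omega)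
  · push_neg at h
    exact lt_of_le_of_lt (Nat.sub_le _ _) (Nat.div_lt_self (by omega) (by omega))


lemma ctilt_eq_zero (p : ℕ) (m : ℕ) : ∀ n, m < n → ctilt p m n = 0 := by
  induction m using Nat.strong_induction_on with
  | _ m ih =>
    intro n hmn
    rw [ctilt]
    split
    · rw [if_neg (by omega)]
    · rename_i h
      push_neg at h
      obtain ⟨hp, hm⟩ := h
      have hp2 : 2 ≤ p := by omega
      have hp0 : 0 < p := by omega
      have hdle : m / p ≤ n / p := Nat.div_le_div_right hmn.le
      have hd1 : 1 ≤ m / p := (Nat.one_le_div_iff hp0).mpr hm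
      split
      · rename_i hr
        split
        · rename_i hnr
          refine ih (m / p) (Nat.div_lt_self (by omega) (by omega)) (n / p) ?_
          rcases lt_or_eq_of_le hdle with h | h
          · exact h
          · exfalso
            have em := Nat.div_add_mod m p
            have en := Nat.div_add_mod n p
            rw [← h] at en
            omega
        · rfl
      · rename_i hr
        have e1 : (if n % p = m % p ∧ 1 ≤ n / p then ctilt p (m / p - 1) (n / p - 1) else 0) = 0 := by
          split
          · rename_i hc
            refine ih (m / p - 1)
              (lt_of_le_of_lt (Nat.sub_le _ _) (Nat.div_lt_self (by omega) (by omega)))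
              (n / p - 1) ?_
            rcases lt_or_eq_of_le hdle with h | h
            · omega
            · exfalso
              have em := Nat.div_add_mod m p
              have en := Nat.div_add_mod n p
              rw [← h, hc.1] at en
              omega
          · rfl
        have e2 : (if n % p = p - 2 - m % p then ctilt p (m / p - 1) (n / p) else 0) = 0 := by
          split
          · refine ih (m / p - 1)
              (lt_of_le_of_lt (Nat.sub_le _ _) (Nat.div_lt_self (by omega) (by omega)))
              (n / p) ?_
            omega
          · rfl
        rw [e1, e2]

lemma sum_residue (p r : ℕ) (hr : r < p) (g : ℕ → ℕ) :
    ∀ M, ∑ n ∈ Finset.range (p * M), (if n % p = r then g (n / p) else 0)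
      = ∑ u ∈ Finset.range M, g u := by
  intro M
  induction M with
  | zero => simp
  | succ M ih =>
    have hpm : p * (M + 1) = p * M + p := by ring
    rw [hpm, Finset.sum_range_add, ih, Finset.sum_range_succ]
    congr 1
    have hterm : ∀ j ∈ Finset.range p,
        (if (p * M + j) % p = r then g ((p * M + j) / p) else 0)
          = (if j = r then g M else 0) := by
      intro j hj
      simp only [Finset.mem_range] at hj
      have h1 : (p * M + j) % p = j := by
        rw [Nat.mul_add_mod]
        exact Nat.mod_eq_of_lt hj
      have h2 : (p * M + j) / p = M := by
        rw [Nat.mul_add_div (by omega)]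
        simp [Nat.div_eq_of_lt hj]
      rw [h1, h2]
    rw [Finset.sum_congr rfl hterm]
    rw [Finset.sum_ite_eq' (Finset.range p) r (fun _ => g M)]
    rw [if_pos (Finset.mem_range.mpr hr)]

lemma sum_ctilt (p : ℕ) (m : ℕ) : ∀ N, m < N →
    (∑ n ∈ Finset.range N, ctilt p m n) = Csum p m := by
  induction m using Nat.strong_induction_on with
  | _ m ih =>
    have ext0 : ∀ N N', m < N → N ≤ N' →
        ∑ n ∈ Finset.range N', ctilt p m n = ∑ n ∈ Finset.range N, ctilt p m n := by
      intro N N' hN hNN'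
      refine (Finset.sum_subset (Finset.range_subset_range.mpr hNN') ?_).symm
      intro x hx hx'
      simp only [Finset.mem_range] at hx hx'
      exact ctilt_eq_zero p m x (by omega)
    intro N hN
    by_cases hbase : p ≤ 1 ∨ m < p
    · have hterm : ∀ n, ctilt p m n = if n = m then 1 else 0 := by
        intro n; rw [ctilt, dif_pos hbase]
      simp only [hterm]
      rw [Finset.sum_ite_eq' (Finset.range N) m (fun _ => 1),
        if_pos (Finset.mem_range.mpr hN), Csum, dif_pos hbase]
    · push_neg at hbase
      obtain ⟨hp1, hpm⟩ := hbase
      have hp2 : 2 ≤ p := by omega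
      have hp0 : 0 < p := by omega
      have hd1 : 1 ≤ m / p := (Nat.one_le_div_iff hp0).mpr hpm
      have hdlt : m / p < m := Nat.div_lt_self (by omega) (by omega)
      have hlt : m < p * (m / p + 1) := by
        rw [Nat.mul_add, Nat.mul_one]
        conv_lhs => rw [← Nat.div_add_mod m p]
        exact Nat.add_lt_add_left (Nat.mod_lt m (by omega)) _
      have hsum : ∑ n ∈ Finset.range N, ctilt p m n
          = ∑ n ∈ Finset.range (p * (m / p + 1)), ctilt p m n := by
        rcases le_total N (p * (m / p + 1)) with h | h
        · exact (ext0 N _ hN h).symm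
        · exact ext0 _ N hlt h
      rw [hsum]
      by_cases hr : m % p = p - 1
      · have hterm : ∀ n, ctilt p m n = if n % p = p - 1 then ctilt p (m / p) (n / p) else 0 := by
          intro n; rw [ctilt, dif_neg (by omega), if_pos hr]
        simp only [hterm]
        rw [sum_residue p (p - 1) (by omega) (fun u => ctilt p (m / p) u) (m / p + 1)]
        rw [ih (m / p) hdlt (m / p + 1) (by omega)]
        conv_rhs => rw [Csum]
        rw [dif_neg (by omega), if_pos hr]
      · have hterm : ∀ n, ctilt p m n =
            (if n % p = m % p ∧ 1 ≤ n / p then ctilt p (m / p - 1) (n / p - 1) else 0) +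
            (if n % p = p - 2 - m % p then ctilt p (m / p - 1) (n / p) else 0) := by
          intro n; rw [ctilt, dif_neg (by omega), if_neg hr]
        simp only [hterm]
        rw [Finset.sum_add_distrib]
        have hdlt' : m / p - 1 < m := by omega
        have h2 : ∑ n ∈ Finset.range (p * (m / p + 1)),
            (if n % p = p - 2 - m % p then ctilt p (m / p - 1) (n / p) else 0)
            = Csum p (m / p - 1) := by
          rw [sum_residue p (p - 2 - m % p) (by omega) (fun u => ctilt p (m / p - 1) u) (m / p + 1)]
          exact ih (m / p - 1) hdlt' (m / p + 1) (by omega)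
        have h1 : ∑ n ∈ Finset.range (p * (m / p + 1)),
            (if n % p = m % p ∧ 1 ≤ n / p then ctilt p (m / p - 1) (n / p - 1) else 0)
            = Csum p (m / p - 1) := by
          have hsplit : ∀ n, (if n % p = m % p ∧ 1 ≤ n / p then ctilt p (m / p - 1) (n / p - 1) else 0)
              = (if n % p = m % p then
                  (if 1 ≤ n / p then ctilt p (m / p - 1) (n / p - 1) else 0) else 0) := by
            intro n
            by_cases hc1 : n % p = m % p <;> by_cases hc2 : 1 ≤ n / p <;> simp [hc1, hc2]
          simp only [hsplit]
          rw [sum_residue p (m % p) (Nat.mod_lt m hp0)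
            (fun u => if 1 ≤ u then ctilt p (m / p - 1) (u - 1) else 0) (m / p + 1)]
          rw [Finset.sum_range_succ']
          simp only [Nat.le_add_left, if_pos, Nat.add_sub_cancel]
          norm_num
          exact ih (m / p - 1) hdlt' (m / p) (by omega)
        rw [h1, h2]
        conv_rhs => rw [Csum]
        rw [dif_neg (by omega), if_neg hr]
        ring

lemma csum_pos (p : ℕ) (m : ℕ) : 1 ≤ Csum p m := by
  induction m using Nat.strong_induction_on with
  | _ m ih =>
    rw [Csum]
    split
    · exact le_refl 1
    · rename_i h
      push_neg at h
      split
      · exact ih (m / p) (Nat.div_lt_self (by omega) (by omega))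
      · have := ih (m / p - 1)
          (lt_of_le_of_lt (Nat.sub_le _ _) (Nat.div_lt_self (by omega) (by omega)))
        omega

lemma csum_one_exists (p : ℕ) (hp : 2 ≤ p) (m : ℕ) (h : Csum p m = 1) :
    ∃ v d, 1 ≤ d ∧ d ≤ p ∧ m + 1 = d * p ^ v := by
  induction m using Nat.strong_induction_on with
  | _ m ih =>
    rw [Csum] at h
    split at h
    · rename_i hb
      exact ⟨0, m + 1, by omega, by omega, by simp⟩
    · rename_i hb
      push_neg at hb
      split at h
      · rename_i hr
        obtain ⟨v, d, h1, h2, h3⟩ := ih (m / p) (Nat.div_lt_self (by omega) (by omega)) h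
        refine ⟨v + 1, d, h1, h2, ?_⟩
        have em := Nat.div_add_mod m p
        have : m + 1 = p * (m / p + 1) := by
          rw [Nat.mul_add, Nat.mul_one]
          omega
        rw [this, h3, pow_succ]
        ring
      · have := csum_pos p (m / p - 1)
        omega

lemma csum_pow (p : ℕ) (hp : 2 ≤ p) : ∀ k c, 1 ≤ c → c ≤ p → Csum p (c * p ^ k - 1) = 1 := by
  intro k
  induction k with
  | zero =>
    intro c hc1 hc2
    rw [Csum, dif_pos (Or.inr (by simp; omega))]
  | succ k ihk =>
    intro c hc1 hc2
    by_cases hsmall : c * p ^ (k + 1) - 1 < p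
    · rw [Csum, dif_pos (Or.inr hsmall)]
    · have ht : 1 ≤ c * p ^ k := Nat.one_le_iff_ne_zero.mpr (by positivity)
      have hrw : c * p ^ (k + 1) - 1 = (p - 1) + (c * p ^ k - 1) * p := by
        have : c * p ^ (k + 1) = (c * p ^ k) * p := by ring
        rw [this]
        have hp0 : 0 < p := by omega
        nlinarith [Nat.sub_add_cancel ht, Nat.sub_add_cancel (show 1 ≤ p by omega),
          Nat.sub_add_cancel (show 1 ≤ (c*p^k)*p from Nat.le_mul_of_pos_right _ hp0 |>.trans' ht)]
      have hmod : (c * p ^ (k + 1) - 1) % p = p - 1 := by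
        rw [hrw, Nat.add_mul_mod_self_right, Nat.mod_eq_of_lt (by omega)]
      have hdiv : (c * p ^ (k + 1) - 1) / p = c * p ^ k - 1 := by
        rw [hrw, Nat.add_mul_div_right _ _ (by omega), Nat.div_eq_of_lt (by omega)]
        omega
      rw [Csum, dif_neg (by omega), if_pos hmod, hdiv]
      exact ihk c hc1 hc2

lemma csum_char (p a k : ℕ) (hp : 2 ≤ p) (ha : 2 ≤ a) (hap : a ≤ p) (m : ℕ)
    (hm1 : p ^ k ≤ m) (hm2 : m < a * p ^ k) :
    Csum p (m - 1) = 1 ↔ ∃ c : ℕ, 1 ≤ c ∧ c ≤ a - 1 ∧ m = c * p ^ k := by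
  have hpk : 1 ≤ p ^ k := Nat.one_le_pow _ _ (by omega)
  have hm0 : 1 ≤ m := le_trans hpk hm1
  constructor
  · intro h
    obtain ⟨v, d, hd1, hd2, hmd⟩ := csum_one_exists p hp (m - 1) h
    have hmd' : m = d * p ^ v := by omega
    by_cases hvk : k ≤ v
    · rcases Nat.lt_or_ge k v with hlt | hge
      · exfalso
        have h1 : p ^ (k + 1) ≤ p ^ v := Nat.pow_le_pow_right (by omega) hlt
        have h2 : p ^ v ≤ d * p ^ v := Nat.le_mul_of_pos_left _ (by omega)
        have h3 : a * p ^ k ≤ p ^ (k + 1) := by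
          rw [pow_succ']
          exact Nat.mul_le_mul_right _ hap
        omega
      · have hv : v = k := by omega
        subst hv
        refine ⟨d, hd1, ?_, hmd'⟩
        have : d * p ^ v < a * p ^ v := by omega
        have := Nat.lt_of_mul_lt_mul_right this
        omega
    · push_neg at hvk
      have h1 : d * p ^ v ≤ p * p ^ v := Nat.mul_le_mul_right _ hd2
      have h2 : p * p ^ v ≤ p ^ k := by
        rw [← pow_succ']
        exact Nat.pow_le_pow_right (by omega) (by omega)
      exact ⟨1, le_refl 1, by omega, by omega⟩
  · rintro ⟨c, hc1, hc2, rfl⟩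
    exact csum_pow p hp k c hc1 (by omega)



/-- **Lemma 3.11.** In a primitive block `B` of a Schur algebra with
`a·p^k` simple modules, let `λ = wt m ∈ B \ I_0^{(k)}` (so `p^k ≤ m < a·p^k`).  Then
`T(λ)` has exactly two `Δ`-quotients, i.e. `∑_{ρ ∈ B} [T(λ) : Δ(ρ)] = 2`, if and only
if `λ` is the smallest weight of `I_c^{(k)}` for some `c ≥ 1`, i.e. `m = c·p^k`. -/
theorem two_delta_quotients_iff (p a k : ℕ) (hp : p.Prime) (ha : 2 ≤ a) (hap : a ≤ p)
    (ℓ i : ℤ) (hℓ : 2 ≤ ℓ) (hi0 : 0 ≤ i) (hi : i ≤ ℓ - 2)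
    (TILT : ℤ → ℤ → ℕ)
    (hTILT : ∀ m n : ℕ, m < a * p ^ k → n < a * p ^ k →
      TILT (wt ℓ i m) (wt ℓ i n) = qtilt p m n) :
    ∀ m : ℕ, p ^ k ≤ m → m < a * p ^ k →
      ((∑ n ∈ Finset.range (a * p ^ k), TILT (wt ℓ i m) (wt ℓ i n)) = 2 ↔
        ∃ c : ℕ, 1 ≤ c ∧ c ≤ a - 1 ∧ m = c * p ^ k) := by
  intro m hm1 hm2
  have hp2 : 2 ≤ p := hp.two_le
  have hpk : 1 ≤ p ^ k := Nat.one_le_pow _ _ (by omega)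
  have hm0 : 1 ≤ m := le_trans hpk hm1
  have hsum : (∑ n ∈ Finset.range (a * p ^ k), TILT (wt ℓ i m) (wt ℓ i n))
      = Csum p (m - 1) + Csum p (m - 1) := by
    rw [Finset.sum_congr rfl (fun n hn => hTILT m n hm2 (Finset.mem_range.mp hn))]
    have hq : ∀ n, qtilt p m n
        = (if 1 ≤ n then ctilt p (m - 1) (n - 1) else 0) + ctilt p (m - 1) n := by
      intro n; rw [qtilt, if_pos hm0]
    simp only [hq]
    rw [Finset.sum_add_distrib]
    rw [sum_ctilt p (m - 1) _ (by omega)]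
    obtain ⟨N', hN'⟩ : ∃ N', a * p ^ k = N' + 1 := ⟨a * p ^ k - 1, by omega⟩
    rw [hN', Finset.sum_range_succ']
    simp only [Nat.add_sub_cancel, Nat.le_add_left, if_pos, Nat.lt_irrefl]
    norm_num
    rw [sum_ctilt p (m - 1) N' (by omega)]
  rw [hsum, show (Csum p (m - 1) + Csum p (m - 1) = 2 ↔ Csum p (m - 1) = 1) from by omega]
  exact csum_char p a k hp2 ha hap m hm1 hm2
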